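/- Let a group Γ act by isometries on a metric space X, and let F ⊆ X be a bounded subset such that the translates of F cover X (for every x ∈ X there is γ ∈ Γ with x ∈ γ·F). Let g ∈ Γ and let p ∈ X be arbitrary. Then there exists η ∈ Γ such that for every x ∈ F, d(x, (η g η⁻¹)·x) ≤ 2·diam(F) + d(p, g·p), where diam(F) denotes the (finite) diameter of F. -/

import Mathlib

open Pointwise

/-- Displacement estimate via conjugation into a "fundamental domain" (core of
Corollary "DiscTranslationLength"): if a group `Γ` acts by isometries on a metric
space `X` and the translates of a bounded set `F` cover `X`, then for every
`g ∈ Γ` and `p ∈ X` there is `η ∈ Γ` with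
`d(x, (η g η⁻¹) • x) ≤ 2 diam F + d(p, g • p)` for all `x ∈ F`. -/
theorem conjugate_displacement_bound
    {Γ : Type*} {X : Type*} [Group Γ] [MetricSpace X] [MulAction Γ X]
    (hiso : ∀ γ : Γ, ∀ x y : X, dist (γ • x) (γ • y) = dist x y)
    (F : Set X) (hF : Bornology.IsBounded F)
    (hcover : ∀ x : X, ∃ γ : Γ, x ∈ γ • F)
    (g : Γ) (p : X) :
    ∃ η : Γ, ∀ x ∈ F,
      dist x ((η * g * η⁻¹) • x) ≤ 2 * Metric.diam F + dist p (g • p) := by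
  obtain ⟨γ, hγ⟩ := hcover p
  obtain ⟨q, hqF, hq⟩ := hγ
  refine ⟨γ⁻¹, fun x hx => ?_⟩
  have hq' : γ⁻¹ • p = q := by rw [← hq]; simp
  have h1 : dist x q ≤ Metric.diam F := Metric.dist_le_diam_of_mem hF hx hqF
  have h2 : dist (γ⁻¹ • p) ((γ⁻¹ * g * γ⁻¹⁻¹) • x) = dist p (g • (γ • x)) := by
    rw [mul_smul, mul_smul, hiso, inv_inv]
  have h3 : dist (g • p) (g • (γ • x)) = dist p (γ • x) := hiso g p (γ • x)
  have h4 : dist p (γ • x) = dist q x := by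
    rw [← hq, hiso]
  calc dist x ((γ⁻¹ * g * γ⁻¹⁻¹) • x)
      ≤ dist x (γ⁻¹ • p) + dist (γ⁻¹ • p) ((γ⁻¹ * g * γ⁻¹⁻¹) • x) := dist_triangle _ _ _
    _ = dist x q + dist p (g • (γ • x)) := by rw [h2, hq']
    _ ≤ dist x q + (dist p (g • p) + dist (g • p) (g • (γ • x))) :=
        add_le_add_right (dist_triangle _ _ _) _
    _ = dist x q + dist p (g • p) + dist q x := by rw [h3, h4]; ring
    _ ≤ Metric.diam F + dist p (g • p) + Metric.diam F := by
        rw [dist_comm q x]; exact add_le_add (add_le_add_left h1 _) h1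
    _ = 2 * Metric.diam F + dist p (g • p) := by ring
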